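/- Let s ≥ 1 be an integer and let p be an (s,0)-Hermite polynomial. Then for all x ∈ ℝ, p(x) = 1 − (∫₀ˣ y^{s−1}(1−y)^{s−1} dy) / (∫₀¹ y^{s−1}(1−y)^{s−1} dy). -/

import Mathlib

/-- A real polynomial `p` is an `(s,j)`-Hermite polynomial if `deg p ≤ 2s-1` and, for
every `0 ≤ k ≤ s-1`, `p⁽ᵏ⁾(0) = δ_{j,k}` and `p⁽ᵏ⁾(1) = 0`. -/
def IsHermitePoly (s j : ℕ) (p : Polynomial ℝ) : Prop :=
  p.natDegree ≤ 2 * s - 1 ∧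
    ∀ k < s, (Polynomial.derivative^[k] p).eval 0 = (if j = k then (1 : ℝ) else 0) ∧
      (Polynomial.derivative^[k] p).eval 1 = 0

/-- A real polynomial `q` is an `(s,j)`-dual Hermite polynomial if `deg q ≤ 2s-1` and, for
every `0 ≤ k ≤ s-1`, `q⁽ᵏ⁾(0) = 0` and `q⁽ᵏ⁾(1) = δ_{j,k}`. -/
def IsDualHermitePoly (s j : ℕ) (q : Polynomial ℝ) : Prop :=
  q.natDegree ≤ 2 * s - 1 ∧
    ∀ k < s, (Polynomial.derivative^[k] q).eval 0 = 0 ∧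
      (Polynomial.derivative^[k] q).eval 1 = (if j = k then (1 : ℝ) else 0)


open MeasureTheory
open Polynomial

lemma herm_deriv_eq (s : ℕ) (hs : 1 ≤ s) (p : Polynomial ℝ)
    (hp : IsHermitePoly s 0 p) :
    ∃ a : ℝ, derivative p = C a * (X ^ (s-1) * (X - 1) ^ (s-1)) := by
  obtain ⟨hdeg, hval⟩ := hp
  set d := derivative p with hd
  have hdvd : (X:ℝ[X]) ^ (s-1) * (X - 1) ^ (s-1) ∣ d := by
    rcases eq_or_ne d 0 with h | h
    · simp [h]
    have hcop : IsCoprime ((X:ℝ[X]) ^ (s-1)) ((X - 1) ^ (s-1)) :=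
      IsCoprime.pow ⟨1, -1, by ring⟩
    rcases Nat.lt_or_ge s 2 with h2 | h2
    · obtain rfl : s = 1 := by omega
      simp
    apply hcop.mul_dvd
    · have hlt : s - 2 < d.rootMultiplicity 0 := by
        apply lt_rootMultiplicity_of_isRoot_iterate_derivative h
        intro m hm
        have := (hval (m+1) (by omega)).1
        rw [if_neg (by omega), Function.iterate_succ_apply] at this
        simpa [IsRoot, hd] using this
      have := (le_rootMultiplicity_iff h (n := s - 1) (a := (0:ℝ))).mp (by omega)
      simpa using this
    · have hlt : s - 2 < d.rootMultiplicity 1 := by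
        apply lt_rootMultiplicity_of_isRoot_iterate_derivative h
        intro m hm
        have := (hval (m+1) (by omega)).2
        rw [Function.iterate_succ_apply] at this
        simpa [IsRoot, hd] using this
      have := (le_rootMultiplicity_iff h (n := s - 1) (a := (1:ℝ))).mp (by omega)
      simpa using this
  obtain ⟨q, hq⟩ := hdvd
  have hm1 : ((X:ℝ[X]) - 1).Monic := by simpa using monic_X_sub_C (1:ℝ)
  have hmon : ((X:ℝ[X]) ^ (s-1) * (X - 1) ^ (s-1)).Monic :=
    (monic_X_pow _).mul (hm1.pow _)
  have hdle : d.natDegree ≤ 2*s - 2 := by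
    have h1 := natDegree_derivative_le p
    rw [← hd] at h1
    omega
  have hmdeg : ((X:ℝ[X]) ^ (s-1) * (X - 1) ^ (s-1)).natDegree = 2*s - 2 := by
    rw [natDegree_mul (monic_X_pow _).ne_zero (hm1.pow _).ne_zero, natDegree_X_pow,
      natDegree_pow]
    have : ((X:ℝ[X]) - 1).natDegree = 1 := by simpa using natDegree_X_sub_C (1:ℝ)
    rw [this]
    omega
  rcases eq_or_ne q 0 with rfl | hq0
  · exact ⟨0, by simpa using hq⟩
  · have hqd : q.natDegree = 0 := by
      have := natDegree_mul hmon.ne_zero hq0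
      rw [← hq, hmdeg] at this
      omega
    obtain ⟨a, ha⟩ := natDegree_eq_zero.mp hqd
    exact ⟨a, by rw [hq, ← ha, mul_comm]⟩


/-- closed form of the `(s,0)`-Hermite polynomial via an incomplete
Beta-type integral. -/
theorem hermitePoly_zero_integral_formula (s : ℕ) (hs : 1 ≤ s)
    (p : Polynomial ℝ) (hp : IsHermitePoly s 0 p) :
    ∀ x : ℝ, p.eval x =
      1 - (∫ y in (0:ℝ)..x, y ^ (s - 1) * (1 - y) ^ (s - 1)) /
            (∫ y in (0:ℝ)..1, y ^ (s - 1) * (1 - y) ^ (s - 1)) := by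
  obtain ⟨a, hda⟩ := herm_deriv_eq s hs p hp
  set c : ℝ := a * (-1)^(s-1) with hc
  set F : ℝ → ℝ := fun x => ∫ y in (0:ℝ)..x, y ^ (s - 1) * (1 - y) ^ (s - 1) with hFdef
  have heval : ∀ y : ℝ, (derivative p).eval y = c * (y ^ (s-1) * (1-y)^(s-1)) := by
    intro y
    rw [hda]
    have h1 : (y - 1)^(s-1) = (-1:ℝ)^(s-1) * (1-y)^(s-1) := by
      rw [← mul_pow, show (-1:ℝ)*(1-y) = y-1 by ring]
    simp only [eval_mul, eval_pow, eval_sub, eval_X, eval_one, eval_C, h1, hc]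
    ring
  have h0 : p.eval 0 = 1 := by simpa using (hp.2 0 hs).1
  have h1 : p.eval 1 = 0 := by simpa using (hp.2 0 hs).2
  have hF : ∀ x : ℝ, ∫ y in (0:ℝ)..x, (derivative p).eval y = p.eval x - p.eval 0 := by
    intro x
    apply intervalIntegral.integral_eq_sub_of_hasDerivAt
    · intro y _; exact p.hasDerivAt y
    · exact ((derivative p).continuous_aeval).intervalIntegrable _ _
  have hInt : ∀ x : ℝ, ∫ y in (0:ℝ)..x, (derivative p).eval y = c * F x := by
    intro x
    rw [hFdef, ← intervalIntegral.integral_const_mul]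
    exact intervalIntegral.integral_congr fun y _ => heval y
  have hpx : ∀ x : ℝ, p.eval x = 1 + c * F x := by
    intro x
    have := hF x
    rw [hInt x, h0] at this
    linarith
  have hF1 : 0 < F 1 := by
    apply intervalIntegral.intervalIntegral_pos_of_pos_on
    · exact Continuous.intervalIntegrable (by continuity) _ _
    · intro y hy
      exact mul_pos (pow_pos hy.1 _) (pow_pos (by linarith [hy.2]) _)
    · norm_num
  have hc1 : c * F 1 = -1 := by
    have := hpx 1
    rw [h1] at this
    linarith
  have hcv : c = -1 / F 1 := by
    field_simp
    linarith
  intro x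
  rw [hpx x, hcv]
  field_simp
  simp only [hFdef]
  have hne : (∫ y in (0:ℝ)..1, y ^ (s - 1) * (1 - y) ^ (s - 1)) ≠ 0 := hF1.ne'
  rw [mul_sub, mul_one, mul_div_cancel₀ _ hne]
  ring
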